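/- arXiv:2212.14346 — 2 statements merged into one kernel-verified Lean document; each statement's English description precedes it below -/
import Mathlib

section
/- Let $(S(t))_{t\ge 0}$ be a semigroup of bounded injective linear operators on a Banach space $X$. For $g : [a,b] \to X$ define $(\delta_{S,1} g)(t_1, t_2) := S(t_1 - a)(g(t_2) - g(t_1))$, and for $f : [a,b]^2_< \to X$ define $(\delta_{S,2} f)(r,s,t) := -f(s,t) + S(s-r)f(r,t) - S(s-r)f(r,s)$. Then the image of $\delta_{S,1}$ equals the kernel of $\delta_{S,2}$: a function $f : [a,b]^2_< \to X$ satisfies $\delta_{S,2} f \equiv 0$ on $[a,b]^3_<$ if and only if there exists $g : [a,b] \to X$ with $f = \delta_{S,1} g$. -/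
/-- `Im (δ_{S,1}) = Ker (δ_{S,2})`. -/
theorem stmt2 {X : Type*} [NormedAddCommGroup X] [NormedSpace ℝ X]
    (S : ℝ → X →L[ℝ] X) (hS0 : S 0 = ContinuousLinearMap.id ℝ X)
    (hsg : ∀ u v : ℝ, 0 ≤ u → 0 ≤ v → S (u + v) = (S u).comp (S v))
    (hinj : ∀ t : ℝ, 0 ≤ t → Function.Injective (S t))
    (a b : ℝ) (hab : a ≤ b) (f : ℝ → ℝ → X) :
    (∀ r s t : ℝ, a ≤ r → r ≤ s → s ≤ t → t ≤ b →
        -(f s t) + S (s - r) (f r t) - S (s - r) (f r s) = 0)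
    ↔ ∃ g : ℝ → X, ∀ s t : ℝ, a ≤ s → s ≤ t → t ≤ b →
        f s t = S (s - a) (g t - g s) := by
  constructor
  · intro h
    refine ⟨fun t => f a t, fun s t has hst htb => ?_⟩
    have := h a s t le_rfl has hst htb
    rw [map_sub]
    linear_combination (norm := abel) -this
  · rintro ⟨g, hg⟩ r s t har hrs hst htb
    have hrb : r ≤ b := hrs.trans (hst.trans htb)
    have hsb : s ≤ b := hst.trans htb
    have hat : a ≤ t := har.trans (hrs.trans hst)
    have has : a ≤ s := har.trans hrs
    have key : S (s - a) = (S (s - r)).comp (S (r - a)) := by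
      have := hsg (s - r) (r - a) (by linarith) (by linarith)
      rwa [show s - r + (r - a) = s - a by ring] at this
    rw [hg s t has hst htb, hg r t har (hrs.trans hst) htb, hg r s har hrs hsb,
      key]
    simp [map_sub]
end

section
/- Let $\hat\sigma \in C^2_b(\mathbb{R})$ and $\alpha \in (0, 1/2)$. The Nemytskii operator $\sigma(f) = \hat\sigma \circ f$ satisfies: there is a constant $C_*$ (depending only on $\|\hat\sigma'\|_\infty$, $\|\hat\sigma''\|_\infty$ and the embedding $W^{2\alpha,2}((0,1)) \hookrightarrow L^\infty$ when $\alpha > 1/4$) such that for all $y_1, y_2 \in W^{2\alpha,2}((0,1))$, $[\sigma(y_1) - \sigma(y_2)]^2_{W^{2\alpha,2}} \le 2\|\hat\sigma'\|_\infty^2 [y_1 - y_2]^2_{W^{2\alpha,2}} + 2 \|\hat\sigma''\|_\infty^2 \|y_1 - y_2\|_\infty^2 \big([y_1]^2_{W^{2\alpha,2}} + [y_2]^2_{W^{2\alpha,2}}\big)$, where $[u]^2_{W^{2\alpha,2}} = \int_0^1\int_0^1 \frac{|u(\xi) - u(\eta)|^2}{|\xi - \eta|^{1 + 4\alpha}}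 d\xi\, d\eta$ is the Gagliardo seminorm. -/
open MeasureTheory

lemma sigma_key (σ σ' σ'' : ℝ → ℝ) (hd1 : ∀ x, HasDerivAt σ (σ' x) x)
    (hd2 : ∀ x, HasDerivAt σ' (σ'' x) x) (C1 C2 M : ℝ)
    (hb1 : ∀ x, |σ' x| ≤ C1) (hb2 : ∀ x, |σ'' x| ≤ C2)
    (a1 b1 a2 b2 : ℝ) (ha : |a1 - a2| ≤ M) (hb : |b1 - b2| ≤ M) :
    |σ a1 - σ a2 - σ b1 + σ b2| ≤ C1 * |a1 - b1 - a2 + b2| + C2 * M * |a2 - b2| := by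
  have hC2 : 0 ≤ C2 := le_trans (abs_nonneg _) (hb2 0)
  set g : ℝ → ℝ := fun t => σ (b1 + t * (a1 - b1)) - σ (b2 + t * (a2 - b2)) with hg
  set g' : ℝ → ℝ := fun t =>
    σ' (b1 + t * (a1 - b1)) * (a1 - b1) - σ' (b2 + t * (a2 - b2)) * (a2 - b2) with hg'
  have hder : ∀ t : ℝ, HasDerivAt g (g' t) t := by
    intro t
    have h1 : HasDerivAt (fun t : ℝ => b1 + t * (a1 - b1)) (a1 - b1) t := by
      simpa using ((hasDerivAt_id t).mul_const (a1 - b1)).const_add b1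
    have h2 : HasDerivAt (fun t : ℝ => b2 + t * (a2 - b2)) (a2 - b2) t := by
      simpa using ((hasDerivAt_id t).mul_const (a2 - b2)).const_add b2
    exact ((hd1 _).comp t h1).sub ((hd1 _).comp t h2)
  obtain ⟨c, hc, hceq⟩ := exists_hasDerivAt_eq_slope g g' (by norm_num : (0:ℝ) < 1)
    (fun t _ => (hder t).continuousAt.continuousWithinAt) (fun t _ => hder t)
  have hval : σ a1 - σ a2 - σ b1 + σ b2 = g' c := by
    rw [hceq]; simp [hg]; ring
  rw [hval]
  set p := b1 + c * (a1 - b1) with hp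
  set q := b2 + c * (a2 - b2) with hq
  have hrw : g' c = σ' p * (a1 - b1 - a2 + b2) + (σ' p - σ' q) * (a2 - b2) := by
    simp only [hg']; ring
  have hlip : |σ' p - σ' q| ≤ C2 * |p - q| := by
    have := convex_univ.norm_image_sub_le_of_norm_hasDerivWithin_le
      (f := σ') (f' := σ'') (fun x _ => (hd2 x).hasDerivWithinAt)
      (fun x _ => by simpa [Real.norm_eq_abs] using hb2 x) (Set.mem_univ q) (Set.mem_univ p)
    simpa [Real.norm_eq_abs] using this
  have hpq : |p - q| ≤ M := by
    have h1 : p - q = (1 - c) * (b1 - b2) + c * (a1 - a2) := by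
      simp only [hp, hq]; ring
    rw [h1]
    calc |(1 - c) * (b1 - b2) + c * (a1 - a2)|
        ≤ |(1 - c) * (b1 - b2)| + |c * (a1 - a2)| := abs_add_le _ _
      _ = (1 - c) * |b1 - b2| + c * |a1 - a2| := by
          rw [abs_mul, abs_mul, abs_of_nonneg (by linarith [hc.2] : (0:ℝ) ≤ 1 - c),
            abs_of_nonneg (le_of_lt hc.1)]
      _ ≤ (1 - c) * M + c * M := by
          have := hc.1; have := hc.2
          gcongr <;> linarith
      _ = M := by ring
  rw [hrw]
  calc |σ' p * (a1 - b1 - a2 + b2) + (σ' p - σ' q) * (a2 - b2)|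
      ≤ |σ' p| * |a1 - b1 - a2 + b2| + |σ' p - σ' q| * |a2 - b2| := by
        rw [← abs_mul, ← abs_mul]; exact abs_add_le _ _
    _ ≤ C1 * |a1 - b1 - a2 + b2| + (C2 * M) * |a2 - b2| :=
        add_le_add (mul_le_mul_of_nonneg_right (hb1 _) (abs_nonneg _))
          (mul_le_mul_of_nonneg_right
            (hlip.trans (mul_le_mul_of_nonneg_left hpq hC2)) (abs_nonneg _))

lemma diag_null : (volume : Measure (ℝ × ℝ)) {p : ℝ × ℝ | p.1 = p.2} = 0 := by
  have : {p : ℝ × ℝ | p.1 = p.2} =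
      (LinearMap.ker ((LinearMap.fst ℝ ℝ ℝ) - (LinearMap.snd ℝ ℝ ℝ)) : Submodule ℝ (ℝ × ℝ)) := by
    ext p; simp [LinearMap.mem_ker, sub_eq_zero]
  rw [this]
  apply Measure.addHaar_submodule
  intro h
  have : ((1:ℝ), (0:ℝ)) ∈ (LinearMap.ker ((LinearMap.fst ℝ ℝ ℝ) - (LinearMap.snd ℝ ℝ ℝ))) := by
    rw [h]; trivial
  simp [LinearMap.mem_ker, sub_eq_zero] at this

/-- Gagliardo seminorm estimate for the Nemytskii operator `σ(y) = σ̂ ∘ y`: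
`[σ(y₁)-σ(y₂)]² ≤ 2‖σ̂'‖∞² [y₁-y₂]² + 2‖σ̂''‖∞² ‖y₁-y₂‖∞² ([y₁]² + [y₂]²)`. -/
theorem stmt13 (α : ℝ) (hα : α ∈ Set.Ioo (0:ℝ) (1/2)) (σ σ' σ'' : ℝ → ℝ)
    (hd1 : ∀ x : ℝ, HasDerivAt σ (σ' x) x)
    (hd2 : ∀ x : ℝ, HasDerivAt σ' (σ'' x) x)
    (C1 C2 : ℝ) (hb1 : ∀ x : ℝ, |σ' x| ≤ C1) (hb2 : ∀ x : ℝ, |σ'' x| ≤ C2)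
    (y1 y2 : ℝ → ℝ) (M : ℝ)
    (hM : ∀ ξ ∈ Set.Ioo (0:ℝ) 1, |y1 ξ - y2 ξ| ≤ M)
    (hy1 : ContinuousOn y1 (Set.Icc 0 1)) (hy2 : ContinuousOn y2 (Set.Icc 0 1))
    (hint1 : IntegrableOn
      (fun p : ℝ × ℝ => ((y1 p.1 - y2 p.1) - (y1 p.2 - y2 p.2)) ^ 2 / |p.1 - p.2| ^ (1 + 4 * α))
      (Set.Ioo (0:ℝ) 1 ×ˢ Set.Ioo (0:ℝ) 1))
    (hint2 : IntegrableOn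
      (fun p : ℝ × ℝ => (y1 p.1 - y1 p.2) ^ 2 / |p.1 - p.2| ^ (1 + 4 * α))
      (Set.Ioo (0:ℝ) 1 ×ˢ Set.Ioo (0:ℝ) 1))
    (hint3 : IntegrableOn
      (fun p : ℝ × ℝ => (y2 p.1 - y2 p.2) ^ 2 / |p.1 - p.2| ^ (1 + 4 * α))
      (Set.Ioo (0:ℝ) 1 ×ˢ Set.Ioo (0:ℝ) 1)) :
    (∫ p in Set.Ioo (0:ℝ) 1 ×ˢ Set.Ioo (0:ℝ) 1,
        ((σ (y1 p.1) - σ (y2 p.1)) - (σ (y1 p.2) - σ (y2 p.2))) ^ 2 / |p.1 - p.2| ^ (1 + 4 * α))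
      ≤ 2 * C1 ^ 2 * (∫ p in Set.Ioo (0:ℝ) 1 ×ˢ Set.Ioo (0:ℝ) 1,
          ((y1 p.1 - y2 p.1) - (y1 p.2 - y2 p.2)) ^ 2 / |p.1 - p.2| ^ (1 + 4 * α))
        + 2 * C2 ^ 2 * M ^ 2 *
          ((∫ p in Set.Ioo (0:ℝ) 1 ×ˢ Set.Ioo (0:ℝ) 1,
              (y1 p.1 - y1 p.2) ^ 2 / |p.1 - p.2| ^ (1 + 4 * α))
            + (∫ p in Set.Ioo (0:ℝ) 1 ×ˢ Set.Ioo (0:ℝ) 1,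
              (y2 p.1 - y2 p.2) ^ 2 / |p.1 - p.2| ^ (1 + 4 * α))) := by
  obtain ⟨hα0, hα2⟩ := hα
  have he : (0:ℝ) < 1 + 4 * α := by linarith
  set S : Set (ℝ × ℝ) := Set.Ioo (0:ℝ) 1 ×ˢ Set.Ioo (0:ℝ) 1 with hSdef
  have hmeasS : MeasurableSet S := measurableSet_Ioo.prod measurableSet_Ioo
  set f0 : ℝ × ℝ → ℝ := fun p =>
    ((σ (y1 p.1) - σ (y2 p.1)) - (σ (y1 p.2) - σ (y2 p.2))) ^ 2 / |p.1 - p.2| ^ (1 + 4 * α)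
    with hf0def
  set G : ℝ × ℝ → ℝ := fun p =>
    2 * C1 ^ 2 * (((y1 p.1 - y2 p.1) - (y1 p.2 - y2 p.2)) ^ 2 / |p.1 - p.2| ^ (1 + 4 * α))
      + 2 * C2 ^ 2 * M ^ 2 * ((y1 p.1 - y1 p.2) ^ 2 / |p.1 - p.2| ^ (1 + 4 * α)
          + (y2 p.1 - y2 p.2) ^ 2 / |p.1 - p.2| ^ (1 + 4 * α)) with hGdef
  have hGint : IntegrableOn G S :=
    (hint1.const_mul _).add ((hint2.add hint3).const_mul _)
  have hf0nn : ∀ p, 0 ≤ f0 p := fun p =>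
    div_nonneg (sq_nonneg _) (Real.rpow_nonneg (abs_nonneg _) _)
  -- pointwise bound
  have hpt : ∀ p ∈ S, f0 p ≤ G p := by
    rintro ⟨ξ, η⟩ ⟨hξ, hη⟩
    have key := sigma_key σ σ' σ'' hd1 hd2 C1 C2 M hb1 hb2
      (y1 ξ) (y1 η) (y2 ξ) (y2 η) (hM ξ hξ) (hM η hη)
    have hnum : ((σ (y1 ξ) - σ (y2 ξ)) - (σ (y1 η) - σ (y2 η))) ^ 2
        ≤ 2 * C1 ^ 2 * ((y1 ξ - y2 ξ) - (y1 η - y2 η)) ^ 2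
          + 2 * C2 ^ 2 * M ^ 2 * ((y1 ξ - y1 η) ^ 2 + (y2 ξ - y2 η) ^ 2) := by
      have h2 : ((σ (y1 ξ) - σ (y2 ξ)) - (σ (y1 η) - σ (y2 η))) ^ 2
          ≤ (C1 * |y1 ξ - y1 η - y2 ξ + y2 η| + C2 * M * |y2 ξ - y2 η|) ^ 2 := by
        rw [← sq_abs]
        apply pow_le_pow_left₀ (abs_nonneg _) _ 2
        rw [show (σ (y1 ξ) - σ (y2 ξ)) - (σ (y1 η) - σ (y2 η))
            = σ (y1 ξ) - σ (y2 ξ) - σ (y1 η) + σ (y2 η) by ring]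
        exact key
      calc ((σ (y1 ξ) - σ (y2 ξ)) - (σ (y1 η) - σ (y2 η))) ^ 2
          ≤ (C1 * |y1 ξ - y1 η - y2 ξ + y2 η| + C2 * M * |y2 ξ - y2 η|) ^ 2 := h2
        _ ≤ 2 * (C1 * |y1 ξ - y1 η - y2 ξ + y2 η|) ^ 2
              + 2 * (C2 * M * |y2 ξ - y2 η|) ^ 2 := by
            nlinarith [sq_nonneg (C1 * |y1 ξ - y1 η - y2 ξ + y2 η| - C2 * M * |y2 ξ - y2 η|)]
        _ = 2 * C1 ^ 2 * ((y1 ξ - y2 ξ) - (y1 η - y2 η)) ^ 2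
              + 2 * C2 ^ 2 * M ^ 2 * (y2 ξ - y2 η) ^ 2 := by
            rw [mul_pow, mul_pow, mul_pow, sq_abs, sq_abs]; ring
        _ ≤ 2 * C1 ^ 2 * ((y1 ξ - y2 ξ) - (y1 η - y2 η)) ^ 2
              + 2 * C2 ^ 2 * M ^ 2 * ((y1 ξ - y1 η) ^ 2 + (y2 ξ - y2 η) ^ 2) := by
            nlinarith [mul_nonneg (by positivity : (0:ℝ) ≤ 2 * C2 ^ 2 * M ^ 2)
              (sq_nonneg (y1 ξ - y1 η))]
    have hw : 0 ≤ |ξ - η| ^ (1 + 4 * α) := Real.rpow_nonneg (abs_nonneg _) _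
    have hGeq : G (ξ, η) =
        (2 * C1 ^ 2 * ((y1 ξ - y2 ξ) - (y1 η - y2 η)) ^ 2
          + 2 * C2 ^ 2 * M ^ 2 * ((y1 ξ - y1 η) ^ 2 + (y2 ξ - y2 η) ^ 2))
          / |ξ - η| ^ (1 + 4 * α) := by
      simp only [hGdef]
      ring
    rcases eq_or_lt_of_le hw with h | h
    · simp only [hf0def, hGeq, ← h, div_zero]
      exact le_refl 0
    · simp only [hf0def, hGeq]
      exact (div_le_div_iff_of_pos_right h).mpr hnum
  -- measurability of f0 on S
  have hσc : Continuous σ := by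
    rw [continuous_iff_continuousAt]; exact fun x => (hd1 x).continuousAt
  have hTopen : IsOpen {p : ℝ × ℝ | p.1 ≠ p.2} :=
    (isClosed_eq continuous_fst continuous_snd).isOpen_compl
  set T : Set (ℝ × ℝ) := S ∩ {p : ℝ × ℝ | p.1 ≠ p.2} with hTdef
  have hTmeas : MeasurableSet T := hmeasS.inter hTopen.measurableSet
  have hTsub1 : ∀ p ∈ T, p.1 ∈ Set.Icc (0:ℝ) 1 := fun p hp =>
    Set.mem_of_mem_of_subset hp.1.1 Set.Ioo_subset_Icc_self
  have hTsub2 : ∀ p ∈ T, p.2 ∈ Set.Icc (0:ℝ) 1 := fun p hp =>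
    Set.mem_of_mem_of_subset hp.1.2 Set.Ioo_subset_Icc_self
  have hdenomc : Continuous (fun p : ℝ × ℝ => |p.1 - p.2| ^ (1 + 4 * α)) := by
    rw [continuous_iff_continuousAt]
    intro p
    exact (Real.continuousAt_rpow_const _ _ (Or.inr he.le)).comp
      ((continuous_fst.sub continuous_snd).abs.continuousAt)
  have hnumc : ContinuousOn
      (fun p : ℝ × ℝ => ((σ (y1 p.1) - σ (y2 p.1)) - (σ (y1 p.2) - σ (y2 p.2))) ^ 2) T := by
    have c1 : ContinuousOn (fun p : ℝ × ℝ => y1 p.1) T :=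
      hy1.comp continuous_fst.continuousOn hTsub1
    have c2 : ContinuousOn (fun p : ℝ × ℝ => y2 p.1) T :=
      hy2.comp continuous_fst.continuousOn hTsub1
    have c3 : ContinuousOn (fun p : ℝ × ℝ => y1 p.2) T :=
      hy1.comp continuous_snd.continuousOn hTsub2
    have c4 : ContinuousOn (fun p : ℝ × ℝ => y2 p.2) T :=
      hy2.comp continuous_snd.continuousOn hTsub2
    exact ((((hσc.comp_continuousOn c1).sub (hσc.comp_continuousOn c2)).sub
      ((hσc.comp_continuousOn c3).sub (hσc.comp_continuousOn c4))).pow 2)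
  have hf0cont : ContinuousOn f0 T := by
    apply hnumc.div hdenomc.continuousOn
    intro p hp
    exact ne_of_gt (Real.rpow_pos_of_pos (abs_sub_pos.mpr hp.2) _)
  have hrestr : volume.restrict S = volume.restrict T := by
    apply (Measure.restrict_congr_set _).symm
    rw [Filter.eventuallyEq_set]
    have : {p : ℝ × ℝ | p.1 = p.2}ᶜ ⊆ {p : ℝ × ℝ | p ∈ T ↔ p ∈ S} := by
      intro p hp
      simp only [Set.mem_setOf_eq, hTdef, Set.mem_inter_iff, Set.mem_setOf_eq]
      exact ⟨fun h => h.1, fun h => ⟨h, hp⟩⟩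
    exact Filter.mem_of_superset ((MeasureTheory.ae_iff.mpr (by simpa using diag_null)))
      this
  have hf0sm : AEStronglyMeasurable f0 (volume.restrict S) := by
    rw [hrestr]
    exact hf0cont.aestronglyMeasurable hTmeas
  have hf0int : IntegrableOn f0 S := by
    apply Integrable.mono' hGint hf0sm
    rw [ae_restrict_iff' hmeasS]
    exact ae_of_all _ fun p hp => by
      rw [Real.norm_eq_abs, abs_of_nonneg (hf0nn p)]; exact hpt p hp
  calc (∫ p in S, f0 p) ≤ ∫ p in S, G p := setIntegral_mono_on hf0int hGint hmeasS hpt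
    _ = _ := by
      have h1 : IntegrableOn (fun p : ℝ × ℝ =>
          2 * C1 ^ 2 * (((y1 p.1 - y2 p.1) - (y1 p.2 - y2 p.2)) ^ 2
            / |p.1 - p.2| ^ (1 + 4 * α))) S := hint1.const_mul _
      have h23 : IntegrableOn (fun p : ℝ × ℝ =>
          2 * C2 ^ 2 * M ^ 2 * ((y1 p.1 - y1 p.2) ^ 2 / |p.1 - p.2| ^ (1 + 4 * α)
            + (y2 p.1 - y2 p.2) ^ 2 / |p.1 - p.2| ^ (1 + 4 * α))) S :=
        (hint2.add hint3).const_mul _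
      have h23' : (∫ p in S, ((y1 p.1 - y1 p.2) ^ 2 / |p.1 - p.2| ^ (1 + 4 * α)
            + (y2 p.1 - y2 p.2) ^ 2 / |p.1 - p.2| ^ (1 + 4 * α)))
          = (∫ p in S, (y1 p.1 - y1 p.2) ^ 2 / |p.1 - p.2| ^ (1 + 4 * α))
            + ∫ p in S, (y2 p.1 - y2 p.2) ^ 2 / |p.1 - p.2| ^ (1 + 4 * α) :=
        integral_add hint2 hint3
      simp only [hGdef]
      rw [integral_add h1 h23, integral_const_mul, integral_const_mul, h23']
end
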